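/- Duality of backward shocks, first identity (Lemma 3.1, first equality of (3.14)): Let f, θ, T be as in the context, let B > θ and R ∈ (0, T·f'(B)), and let y : [R/f'(B), T] → ℝ be a solution of the left backward-shock Cauchy problem with data (R,B). Set L := y(T) (which lies in (T·f'(B̄), 0)) and s₀ := L/f'(B̄) ∈ (0,T). Note that B̄ < θ, that (for A := B̄) the point Ā equals B, and that L ∈ (T·f'(B̄), 0), so the right backward-shock Cauchy problem with data (L, B̄) makes sense: it asks for x : [s₀,T] → ℝ with x(s₀) = 0 and x'(t) = λ((f')⁻¹((x(t)+L)/t), B). Then every solution x of this problem satisfies x(T) = R. -/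

import Mathlib

noncomputable section

open Set Filter

/-- The Rankine–Hugoniot speed `λ(u,v) = (f(v) - f(u)) / (v - u)`. -/
def lamF (f : ℝ → ℝ) (u v : ℝ) : ℝ := (f v - f u) / (v - u)

/-- `y` solves the left backward-shock Cauchy problem with data `(R, B)` on
`[R / f'(B), T]`:  `y(R/f'(B)) = 0` and `y'(t) = λ((f')⁻¹((y(t)+R)/t), B̄)`.
Here `finv` denotes the inverse of `deriv f`. -/
def LeftShockSol (f finv : ℝ → ℝ) (T B Bbar R : ℝ) (y : ℝ → ℝ) : Prop :=
  y (R / deriv f B) = 0 ∧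
  ∀ t ∈ Icc (R / deriv f B) T,
    HasDerivWithinAt y (lamF f (finv ((y t + R) / t)) Bbar) (Icc (R / deriv f B) T) t

/-- `x` solves the right backward-shock Cauchy problem with data `(L, A)` on
`[L / f'(A), T]`:  `x(L/f'(A)) = 0` and `x'(t) = λ((f')⁻¹((x(t)+L)/t), Ā)`.
Here `finv` denotes the inverse of `deriv f`. -/
def RightShockSol (f finv : ℝ → ℝ) (T A Abar L : ℝ) (x : ℝ → ℝ) : Prop :=
  x (L / deriv f A) = 0 ∧
  ∀ t ∈ Icc (L / deriv f A) T,
    HasDerivWithinAt x (lamF f (finv ((x t + L) / t)) Abar) (Icc (L / deriv f A) T) t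

lemma lamF_mul (f : ℝ → ℝ) (u c : ℝ) : (c - u) * lamF f u c = f c - f u := by
  rcases eq_or_ne c u with h | h
  · simp [lamF, h]
  · rw [lamF, mul_div_cancel₀ _ (sub_ne_zero.2 h)]

/-- The conserved quantity `t ↦ t * (f B - f u - f'(u)(c - u))`, `u = finv((z t + K)/t)`,
is constant along a backward-shock solution. -/
lemma shock_invariant (f finv : ℝ → ℝ) (a : ℝ) (ha : 0 < a) (hf : ContDiff ℝ 2 f)
    (hf2 : ∀ u : ℝ, a ≤ deriv (deriv f) u)
    (hfinv2 : ∀ p : ℝ, deriv f (finv p) = p)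
    (hfinvC : Continuous finv)
    (Bv c : ℝ) (hfc : f c = f Bv)
    (t₀ T K : ℝ) (ht₀ : 0 < t₀) (z : ℝ → ℝ)
    (hz : ∀ t ∈ Icc t₀ T,
      HasDerivWithinAt z (lamF f (finv ((z t + K) / t)) c) (Icc t₀ T) t) :
    ∀ t ∈ Icc t₀ T,
      t * (f Bv - f (finv ((z t + K) / t))
          - deriv f (finv ((z t + K) / t)) * (c - finv ((z t + K) / t)))
        = t₀ * (f Bv - f (finv ((z t₀ + K) / t₀))
          - deriv f (finv ((z t₀ + K) / t₀)) * (c - finv ((z t₀ + K) / t₀))) := by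
  have hfd : ∀ w, HasDerivAt f (deriv f w) w := fun w =>
    ((hf.differentiable two_ne_zero) w).hasDerivAt
  have hf' : ContDiff ℝ 1 (deriv f) := by
    rw [show (2 : WithTop ℕ∞) = 1 + 1 from rfl, contDiff_succ_iff_deriv] at hf
    exact hf.2.2
  have hf2d : ∀ w, HasDerivAt (deriv f) (deriv (deriv f) w) w := fun w =>
    ((hf'.differentiable one_ne_zero) w).hasDerivAt
  set Φ : ℝ → ℝ := fun s =>
    s * (f Bv - f (finv ((z s + K) / s))
      - deriv f (finv ((z s + K) / s)) * (c - finv ((z s + K) / s))) with hΦ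
  have key : ∀ t ∈ Icc t₀ T, HasDerivWithinAt Φ 0 (Icc t₀ T) t := by
    intro t ht
    have htpos : 0 < t := lt_of_lt_of_le ht₀ ht.1
    have htne : t ≠ 0 := ne_of_gt htpos
    set u : ℝ := finv ((z t + K) / t) with hu
    set lam : ℝ := lamF f u c with hlam
    have hzt : HasDerivWithinAt z lam (Icc t₀ T) t := hz t ht
    have h1 : HasDerivWithinAt (fun s => (z s + K) / s)
        ((lam * t - (z t + K) * 1) / t ^ 2) (Icc t₀ T) t :=
      (hzt.add_const K).div (hasDerivWithinAt_id t _) htne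
    have hA : deriv (deriv f) u ≠ 0 := ne_of_gt (lt_of_lt_of_le ha (hf2 u))
    have hfinvd : HasDerivAt finv (deriv (deriv f) u)⁻¹ ((z t + K) / t) :=
      HasDerivAt.of_local_left_inverse hfinvC.continuousAt (hf2d u) hA
        (Eventually.of_forall hfinv2)
    have h2 : HasDerivWithinAt (finv ∘ fun s => (z s + K) / s)
        ((deriv (deriv f) u)⁻¹ * ((lam * t - (z t + K) * 1) / t ^ 2)) (Icc t₀ T) t :=
      HasDerivAt.comp_hasDerivWithinAt t hfinvd h1
    have hG : HasDerivAt (fun w => f Bv - f w - deriv f w * (c - w))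
        (0 - deriv f u - (deriv (deriv f) u * (c - u) + deriv f u * (0 - 1))) u :=
      ((hasDerivAt_const _ _).sub (hfd u)).sub
        ((hf2d u).mul ((hasDerivAt_const _ _).sub (hasDerivAt_id u)))
    have h3 : HasDerivWithinAt ((fun w => f Bv - f w - deriv f w * (c - w)) ∘
        (finv ∘ fun s => (z s + K) / s))
        ((0 - deriv f u - (deriv (deriv f) u * (c - u) + deriv f u * (0 - 1))) *
          ((deriv (deriv f) u)⁻¹ * ((lam * t - (z t + K) * 1) / t ^ 2))) (Icc t₀ T) t :=
      HasDerivAt.comp_hasDerivWithinAt t hG h2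
    have h4 := (hasDerivWithinAt_id t (Icc t₀ T)).mul h3
    have hderiveq : deriv f u = (z t + K) / t := hfinv2 _
    have hmul : (c - u) * lam = f c - f u := lamF_mul f u c
    have hA' : (deriv (deriv f) u)⁻¹ * deriv (deriv f) u = 1 := inv_mul_cancel₀ hA
    have hzero : 1 * (((fun w => f Bv - f w - deriv f w * (c - w)) ∘
          (finv ∘ fun s => (z s + K) / s)) t) +
        id t * ((0 - deriv f u - (deriv (deriv f) u * (c - u) + deriv f u * (0 - 1))) *
          ((deriv (deriv f) u)⁻¹ * ((lam * t - (z t + K) * 1) / t ^ 2))) = 0 := by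
      show 1 * (f Bv - f u - deriv f u * (c - u)) +
        t * ((0 - deriv f u - (deriv (deriv f) u * (c - u) + deriv f u * (0 - 1))) *
          ((deriv (deriv f) u)⁻¹ * ((lam * t - (z t + K) * 1) / t ^ 2))) = 0
      rw [hderiveq]
      have hexp : t * ((0 - (z t + K) / t - (deriv (deriv f) u * (c - u) +
            (z t + K) / t * (0 - 1))) *
          ((deriv (deriv f) u)⁻¹ * ((lam * t - (z t + K) * 1) / t ^ 2)))
          = -((c - u) * lam) + (c - u) * ((z t + K) / t) := by
        field_simp
        ring
      rw [hexp, hmul]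
      have : (z t + K) / t * (c - u) = (c - u) * ((z t + K) / t) := by ring
      rw [this]
      linarith [hfc]
    rw [hzero] at h4
    have : Φ = fun s => id s * (((fun w => f Bv - f w - deriv f w * (c - w)) ∘
        (finv ∘ fun s => (z s + K) / s)) s) := by
      funext s; simp [hΦ, Function.comp]
    rw [this]
    exact h4
  have hcont : ContinuousOn Φ (Icc t₀ T) := fun t ht =>
    (key t ht).continuousWithinAt
  intro t ht
  exact constant_of_has_deriv_right_zero hcont
    (fun s hs => (key s (Ico_subset_Icc_self hs)).mono_of_mem_nhdsWithin
      (mem_of_superset (Icc_mem_nhdsGE_of_mem ⟨le_refl s, hs.2⟩)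
        (Icc_subset_Icc hs.1 le_rfl))) t ht

set_option maxHeartbeats 1000000 in
/-- **Lemma 3.1, first equality of (3.14)**: the right backward shock with data
`(y(T), B̄)` is dual to the left backward shock with data `(R, B)`. -/
theorem backward_shock_duality_first
    (f : ℝ → ℝ) (a : ℝ) (ha : 0 < a) (hf : ContDiff ℝ 2 f)
    (hf2 : ∀ u : ℝ, a ≤ deriv (deriv f) u)
    (θ : ℝ) (hθ : deriv f θ = 0)
    (finv : ℝ → ℝ) (hfinv1 : ∀ u : ℝ, finv (deriv f u) = u)
    (hfinv2 : ∀ p : ℝ, deriv f (finv p) = p)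
    (T : ℝ) (hT : 0 < T)
    (B Bbar : ℝ) (hB : θ < B) (hBbar1 : Bbar ≤ θ) (hBbar2 : f Bbar = f B)
    (R : ℝ) (hR : R ∈ Ioo (0:ℝ) (T * deriv f B))
    (y : ℝ → ℝ) (hy : LeftShockSol f finv T B Bbar R y)
    (hyT : y T ∈ Ioo (T * deriv f Bbar) 0)
    (x : ℝ → ℝ) (hx : RightShockSol f finv T Bbar B (y T) x) :
    x T = R := by
  obtain ⟨hy0, hyode⟩ := hy
  obtain ⟨hx0, hxode⟩ := hx
  have hfd : ∀ w, HasDerivAt f (deriv f w) w := fun w =>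
    ((hf.differentiable two_ne_zero) w).hasDerivAt
  have hf' : ContDiff ℝ 1 (deriv f) := by
    rw [show (2 : WithTop ℕ∞) = 1 + 1 from rfl, contDiff_succ_iff_deriv] at hf
    exact hf.2.2
  have hf2d : ∀ w, HasDerivAt (deriv f) (deriv (deriv f) w) w := fun w =>
    ((hf'.differentiable one_ne_zero) w).hasDerivAt
  have hmono : StrictMono (deriv f) :=
    strictMono_of_deriv_pos fun w => lt_of_lt_of_le ha (hf2 w)
  have hf'B : 0 < deriv f B := hθ ▸ hmono hB
  have hfBθ : f θ < f B := by
    obtain ⟨ξ, hξ, hslope⟩ := exists_hasDerivAt_eq_slope f (deriv f) hB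
      (hf.continuous.continuousOn) (fun w _ => hfd w)
    have h1 : 0 < deriv f ξ := hθ ▸ hmono hξ.1
    rw [hslope] at h1
    have := mul_pos h1 (sub_pos.2 hB)
    rw [div_mul_cancel₀ _ (ne_of_gt (sub_pos.2 hB))] at this
    linarith
  have hBbarθ : Bbar < θ := by
    rcases lt_or_eq_of_le hBbar1 with h | h
    · exact h
    · exfalso; rw [h] at hBbar2; linarith
  have hf'Bbar : deriv f Bbar < 0 := hθ ▸ hmono hBbarθ
  have hBBbar : Bbar < B := hBbarθ.trans hB
  have hfinvSM : StrictMono finv := fun p q h =>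
    hmono.lt_iff_lt.mp (by rwa [hfinv2, hfinv2])
  have hfinvC : Continuous finv :=
    Monotone.continuous_of_surjective hfinvSM.monotone fun w => ⟨deriv f w, hfinv1 w⟩
  have hR0 : R ≠ 0 := ne_of_gt hR.1
  have hfB0 : deriv f B ≠ 0 := ne_of_gt hf'B
  have hfBbar0 : deriv f Bbar ≠ 0 := ne_of_lt hf'Bbar
  have hT0 : T ≠ 0 := ne_of_gt hT
  have hL2 : y T < 0 := hyT.2
  have hL0 : y T ≠ 0 := ne_of_lt hL2
  have ht₀pos : 0 < R / deriv f B := div_pos hR.1 hf'B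
  have ht₀T : R / deriv f B < T := (div_lt_iff₀ hf'B).2 (by linarith [hR.2])
  have hs₀pos : 0 < y T / deriv f Bbar := div_pos_of_neg_of_neg hL2 hf'Bbar
  have hs₀T : y T / deriv f Bbar < T := (div_lt_iff_of_neg hf'Bbar).2 hyT.1
  set u : ℝ := finv ((y T + R) / T) with hu
  set v : ℝ := finv ((x T + y T) / T) with hv
  -- the two conserved quantities
  have Inv1 := shock_invariant f finv a ha hf hf2 hfinv2 hfinvC B Bbar hBbar2
    (R / deriv f B) T R ht₀pos y hyode
  have Inv2 := shock_invariant f finv a ha hf hf2 hfinv2 hfinvC B B rfl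
    (y T / deriv f Bbar) T (y T) hs₀pos x hxode
  have e1 : (0 + R) / (R / deriv f B) = deriv f B := by
    rw [zero_add]; field_simp
  have e2 : (0 + y T) / (y T / deriv f Bbar) = deriv f Bbar := by
    rw [zero_add]; field_simp
  have eq1 : T * (f B - f u - deriv f u * (Bbar - u)) = R * (B - Bbar) := by
    have h := Inv1 T ⟨ht₀T.le, le_rfl⟩
    rw [hy0, e1, hfinv1] at h
    have hrhs : R / deriv f B * (f B - f B - deriv f B * (Bbar - B)) = R * (B - Bbar) := by
      field_simp; ring
    rw [hrhs] at h
    exact h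
  have hrhs2 : y T / deriv f Bbar * (f B - f Bbar - deriv f Bbar * (B - Bbar))
      = -(y T) * (B - Bbar) := by
    rw [hBbar2]
    field_simp
    ring
  have eq2 : T * (f B - f v - deriv f v * (B - v)) = -(y T) * (B - Bbar) := by
    have h := Inv2 T ⟨hs₀T.le, le_rfl⟩
    rw [hx0, e2, hfinv1, hrhs2] at h
    exact h
  have eq3 : y T + R = T * deriv f u := by
    rw [hfinv2]
    field_simp
  -- equality of the two G₂-values
  have hG2 : f B - f v - deriv f v * (B - v) = f B - f u - deriv f u * (B - u) := by
    apply mul_left_cancel₀ hT0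
    linear_combination eq2 - eq1 - (B - Bbar) * eq3
  -- derivative of the auxiliary functions
  have hGder : ∀ cc w : ℝ, HasDerivAt (fun w => f B - f w - deriv f w * (cc - w))
      (0 - deriv f w - (deriv (deriv f) w * (cc - w) + deriv f w * (0 - 1))) w :=
    fun cc w => ((hasDerivAt_const _ _).sub (hfd w)).sub
      ((hf2d w).mul ((hasDerivAt_const _ _).sub (hasDerivAt_id w)))
  have hGcont : ∀ cc : ℝ, Continuous (fun w => f B - f w - deriv f w * (cc - w)) :=
    fun cc => (continuous_const.sub hf.continuous).sub
      ((hf'.continuous).mul (continuous_const.sub continuous_id))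
  have hG1mono : StrictMonoOn (fun w => f B - f w - deriv f w * (Bbar - w)) (Ici Bbar) := by
    apply strictMonoOn_of_deriv_pos (convex_Ici Bbar) (hGcont Bbar).continuousOn
    intro w hw
    rw [(hGder Bbar w).deriv]
    rw [interior_Ici] at hw
    have h1 := hf2 w
    have h2 : Bbar < w := hw
    nlinarith
  have hG2anti : StrictAntiOn (fun w => f B - f w - deriv f w * (B - w)) (Iic B) := by
    apply strictAntiOn_of_deriv_neg (convex_Iic B) (hGcont B).continuousOn
    intro w hw
    rw [(hGder B w).deriv]
    rw [interior_Iic] at hw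
    have h1 := hf2 w
    have h2 : w < B := hw
    nlinarith
  -- u < B
  have hultB : u < B := by
    by_contra hle
    push_neg at hle
    have h1 : (fun w => f B - f w - deriv f w * (Bbar - w)) B
        ≤ (fun w => f B - f w - deriv f w * (Bbar - w)) u :=
      hG1mono.monotoneOn (mem_Ici.2 hBBbar.le) (mem_Ici.2 (hBBbar.le.trans hle)) hle
    simp only at h1
    have h2 := mul_le_mul_of_nonneg_left h1 hT.le
    rw [eq1] at h2
    nlinarith [mul_pos (sub_pos.2 hR.2) (sub_pos.2 hBBbar)]
  -- v < B  (via the intermediate value theorem)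
  have hvltB : v < B := by
    by_contra hle
    push_neg at hle
    have hxcont : ContinuousOn x (Icc (y T / deriv f Bbar) T) :=
      fun t ht => (hxode t ht).continuousWithinAt
    have hζcont : ContinuousOn (fun t => (x t + y T) / t) (Icc (y T / deriv f Bbar) T) :=
      (hxcont.add continuousOn_const).div continuousOn_id
        (fun t ht => ne_of_gt (lt_of_lt_of_le hs₀pos ht.1))
    have hζs₀ : (fun t => (x t + y T) / t) (y T / deriv f Bbar) = deriv f Bbar := by
      simp only [hx0]; exact e2
    have hζT : (fun t => (x t + y T) / t) T = deriv f v := (hfinv2 _).symm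
    have hmem : deriv f B ∈ Icc ((fun t => (x t + y T) / t) (y T / deriv f Bbar))
        ((fun t => (x t + y T) / t) T) := by
      rw [hζs₀, hζT]
      exact ⟨hf'Bbar.le.trans hf'B.le, by
        rcases eq_or_lt_of_le hle with h | h
        · rw [h]
        · exact (hmono h).le⟩
    obtain ⟨τ, hτ, hτeq⟩ := intermediate_value_Icc hs₀T.le hζcont hmem
    have h := Inv2 τ hτ
    simp only at hτeq
    rw [hτeq, hfinv1, hx0, e2, hfinv1, hrhs2] at h
    have : τ * (f B - f B - deriv f B * (B - B)) = 0 := by ring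
    rw [this] at h
    nlinarith [mul_pos (neg_pos.2 hL2) (sub_pos.2 hBBbar)]
  -- conclude u = v, hence x T = R
  have huv : v = u := hG2anti.injOn (mem_Iic.2 hvltB.le) (mem_Iic.2 hultB.le) hG2
  have hfinal : (x T + y T) / T = (y T + R) / T := by
    rw [← hfinv2 ((x T + y T) / T), ← hfinv2 ((y T + R) / T), ← hu, ← hv, huv]
  field_simp at hfinal
  linarith
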